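/- For every even n = 2M ≥ 0, with α, β, c ∈ ℂ such that all expressions are defined, the polynomial Q_n(x) := κ_n [ ₂F₁(-M, M+(α+β+2)/2; (α+1)/2; (1-x²)/(1-c²)) + (n(1-x)/((c+1)(α+1))) ₂F₁(1-M, M+(α+β+2)/2; (α+3)/2; (1-x²)/(1-c²)) ], with κ_n = (1-c²)^M ((α+1)/2)_M / ((n+α+β+2)/2)_M, is a monic polynomial of degree n in x. -/

import Mathlib

open Polynomial Finset

/-- Pochhammer (shifted factorial) symbol `(a)_k = a(a+1)⋯(a+k-1)`. -/
noncomputable def poch (a : ℂ) (k : ℕ) : ℂ := (ascPochhammer ℂ k).eval a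

/-- Terminating Gauss hypergeometric polynomial
`₂F₁(a, b; c; z) = ∑_{k=0}^{K} (a)_k (b)_k / ((c)_k k!) z^k`. -/
noncomputable def F21 (a b c : ℂ) (K : ℕ) (z : ℂ) : ℂ :=
  ∑ k ∈ Finset.range (K + 1), poch a k * poch b k / (poch c k * (k.factorial : ℂ)) * z ^ k

lemma poch_zero (a : ℂ) : poch a 0 = 1 := by simp [poch]

lemma poch_succ (a : ℂ) (n : ℕ) : poch a (n + 1) = poch a n * (a + n) := by
  simp [poch, ascPochhammer_succ_eval]

lemma poch_eq_prod (a : ℂ) (n : ℕ) : poch a n = ∏ i ∈ Finset.range n, (a + i) := by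
  induction n with
  | zero => simp [poch_zero]
  | succ n ih => rw [poch_succ, ih, Finset.prod_range_succ]

lemma poch_neg_nat (n : ℕ) : poch (-(n : ℂ)) n = (-1) ^ n * n.factorial := by
  induction n with
  | zero => simp [poch_zero]
  | succ n ih =>
    have h : poch (-((n:ℕ)+1) : ℂ) (n+1) = (-((n:ℂ)+1)) * poch (-(n:ℂ)) n := by
      rw [poch, ascPochhammer_succ_left, eval_mul, eval_comp]
      simp [poch]
    push_cast
    push_cast at h
    rw [h, ih]
    rw [Nat.factorial_succ]
    push_cast
    ring


/-- The even-degree hypergeometric representation of the big `-1` Jacobi polynomial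
`Q_{2M}^{(0)}(x; α, β, c)` defines a monic polynomial of degree `n = 2M` in `x`. -/
theorem bigQ_even_hypergeometric_monic (M : ℕ) (α β c : ℂ)
    (hc1 : c ≠ 1) (hc2 : c ≠ -1)
    (hα : ∀ k : ℕ, α + 1 + 2 * k ≠ 0)
    (hκ : poch ((2 * (M : ℂ) + α + β + 2) / 2) M ≠ 0) :
    ∃ P : Polynomial ℂ, P.Monic ∧ P.natDegree = 2 * M ∧ ∀ x : ℂ,
      P.eval x =
        (1 - c ^ 2) ^ M * poch ((α + 1) / 2) M / poch ((2 * (M : ℂ) + α + β + 2) / 2) M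
        * (F21 (-(M : ℂ)) ((M : ℂ) + (α + β + 2) / 2) ((α + 1) / 2) M
              ((1 - x ^ 2) / (1 - c ^ 2))
          + 2 * (M : ℂ) * (1 - x) / ((c + 1) * (α + 1))
              * F21 (1 - (M : ℂ)) ((M : ℂ) + (α + β + 2) / 2) ((α + 3) / 2) (M - 1)
                ((1 - x ^ 2) / (1 - c ^ 2))) := by
  -- basic nonvanishing facts
  have hcm : c + 1 ≠ 0 := fun h => hc2 (by linear_combination h)
  have hcp : c - 1 ≠ 0 := sub_ne_zero.mpr hc1
  have hc : (1 : ℂ) - c ^ 2 ≠ 0 := by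
    intro h
    exact mul_ne_zero hcp hcm (by linear_combination -h)
  have hb : ((2 * (M : ℂ) + α + β + 2) / 2) = (M : ℂ) + (α + β + 2) / 2 := by ring
  set b : ℂ := (M : ℂ) + (α + β + 2) / 2 with hbdef
  rw [hb] at hκ
  have hpα : poch ((α + 1) / 2) M ≠ 0 := by
    rw [poch_eq_prod]
    apply Finset.prod_ne_zero_iff.mpr
    intro i _ h0
    exact hα i (by linear_combination 2 * h0)
  -- the polynomial
  set u : ℂ := (1 - c ^ 2)⁻¹ with hu
  set Z : ℂ[X] := C u * (1 - X ^ 2) with hZ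
  set a1 : ℕ → ℂ := fun k =>
    poch (-(M : ℂ)) k * poch b k / (poch ((α + 1) / 2) k * k.factorial) with ha1
  set a2 : ℕ → ℂ := fun k =>
    poch (1 - (M : ℂ)) k * poch b k / (poch ((α + 3) / 2) k * k.factorial) with ha2
  set κ : ℂ := (1 - c ^ 2) ^ M * poch ((α + 1) / 2) M / poch b M with hκdef
  set t : ℂ := 2 * (M : ℂ) / ((c + 1) * (α + 1)) with htdef
  set S1 : ℂ[X] := ∑ k ∈ Finset.range (M + 1), C (a1 k) * Z ^ k with hS1
  set S2 : ℂ[X] := ∑ k ∈ Finset.range (M - 1 + 1), C (a2 k) * Z ^ k with hS2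
  -- degree bounds
  have hZdeg : Z.natDegree ≤ 2 := by
    refine (natDegree_C_mul_le _ _).trans ?_
    refine (natDegree_sub_le _ _).trans ?_
    simp [natDegree_X_pow]
  have hdeg1 : S1.natDegree ≤ 2 * M := by
    refine natDegree_sum_le_of_forall_le _ _ (fun k hk => ?_)
    have hk' : k ≤ M := Nat.lt_succ_iff.mp (Finset.mem_range.mp hk)
    refine (natDegree_C_mul_le _ _).trans ((natDegree_pow_le).trans ?_)
    calc k * Z.natDegree ≤ k * 2 := Nat.mul_le_mul_left k hZdeg
      _ ≤ 2 * M := by omega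
  have hdeg2' : S2.natDegree ≤ 2 * (M - 1) := by
    refine natDegree_sum_le_of_forall_le _ _ (fun k hk => ?_)
    have hk' : k ≤ M - 1 := Nat.lt_succ_iff.mp (Finset.mem_range.mp hk)
    refine (natDegree_C_mul_le _ _).trans ((natDegree_pow_le).trans ?_)
    calc k * Z.natDegree ≤ k * 2 := Nat.mul_le_mul_left k hZdeg
      _ ≤ 2 * (M - 1) := by omega
  have hzero : M = 0 → C t * (1 - X) * S2 = 0 := by
    intro hM
    have : t = 0 := by rw [htdef, hM]; simp
    rw [this]; simp
  have hdeg2 : 1 ≤ M → (C t * (1 - X) * S2).natDegree ≤ 2 * M - 1 := by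
    intro hM
    refine natDegree_mul_le.trans ?_
    have h1 : (C t * (1 - X)).natDegree ≤ 1 := by
      refine (natDegree_C_mul_le _ _).trans ?_
      refine (natDegree_sub_le _ _).trans ?_
      simp
    omega
  -- overall degree bound
  have hPdeg : (C κ * (S1 + C t * (1 - X) * S2)).natDegree ≤ 2 * M := by
    refine (natDegree_C_mul_le _ _).trans ((natDegree_add_le _ _).trans ?_)
    rcases Nat.eq_zero_or_pos M with hM | hM
    · rw [hzero hM]
      simp [hdeg1]
    · have := hdeg2 hM
      omega
  -- coefficient computations
  have h1x2deg : ((1 : ℂ[X]) - X ^ 2).natDegree = 2 := by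
    have : (1 : ℂ[X]) - X ^ 2 = -(X ^ 2 - C 1) := by rw [map_one]; ring
    rw [this, natDegree_neg, natDegree_X_pow_sub_C]
  have h1x2lead : ((1 : ℂ[X]) - X ^ 2).leadingCoeff = -1 := by
    have h : (1 : ℂ[X]) - X ^ 2 = -(X ^ 2 - C 1) := by rw [map_one]; ring
    rw [h, leadingCoeff_neg, (monic_X_pow_sub_C (1 : ℂ) (two_ne_zero)).leadingCoeff]
  have hZMcoeff : (Z ^ M).coeff (2 * M) = u ^ M * (-1) ^ M := by
    rw [hZ, mul_pow, ← C_pow, coeff_C_mul]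
    have hd : (((1 : ℂ[X]) - X ^ 2) ^ M).natDegree = 2 * M := by
      rw [natDegree_pow' (by rw [h1x2lead]; simp), h1x2deg, Nat.mul_comm]
    have hl : (((1 : ℂ[X]) - X ^ 2) ^ M).leadingCoeff = (-1) ^ M := by
      rw [leadingCoeff_pow, h1x2lead]
    rw [← hd, coeff_natDegree, hl]
  have hcoeff : (C κ * (S1 + C t * (1 - X) * S2)).coeff (2 * M) = 1 := by
    rw [coeff_C_mul, coeff_add]
    have h2 : (C t * (1 - X) * S2).coeff (2 * M) = 0 := by
      rcases Nat.eq_zero_or_pos M with hM | hM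
      · rw [hzero hM]; simp
      · exact coeff_eq_zero_of_natDegree_lt (lt_of_le_of_lt (hdeg2 hM) (by omega))
    have h1 : S1.coeff (2 * M) = a1 M * (u ^ M * (-1) ^ M) := by
      rw [hS1, finset_sum_coeff, Finset.sum_range_succ, coeff_C_mul, hZMcoeff]
      have : ∀ k ∈ Finset.range M, (C (a1 k) * Z ^ k).coeff (2 * M) = 0 := by
        intro k hk
        have hk' : k < M := Finset.mem_range.mp hk
        refine coeff_eq_zero_of_natDegree_lt (lt_of_le_of_lt ((natDegree_C_mul_le _ _).trans
          ((natDegree_pow_le).trans ?_)) (show 2 * M - 1 < 2 * M by omega))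
        calc k * Z.natDegree ≤ k * 2 := Nat.mul_le_mul_left k hZdeg
          _ ≤ 2 * M - 1 := by omega
      rw [Finset.sum_eq_zero this, zero_add]
    rw [h1, h2, add_zero]
    -- now the scalar computation
    have hmm : ((-1 : ℂ)) ^ M * (-1) ^ M = 1 := by
      rw [← pow_add, ← two_mul, pow_mul]; norm_num
    have hfact : (M.factorial : ℂ) ≠ 0 := Nat.cast_ne_zero.mpr M.factorial_ne_zero
    rw [hκdef, ha1]
    simp only [poch_neg_nat, hu, inv_pow]
    have hpow : ((1 : ℂ) - c ^ 2) ^ M ≠ 0 := pow_ne_zero _ hc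
    field_simp
    ring_nf
    rw [show ((-1 : ℂ)) ^ (M * 2) = 1 by rw [mul_comm M 2, pow_mul]; norm_num]
  -- assemble
  refine ⟨C κ * (S1 + C t * (1 - X) * S2), monic_of_natDegree_le_of_coeff_eq_one _ hPdeg hcoeff,
    le_antisymm hPdeg (le_natDegree_of_ne_zero (by rw [hcoeff]; exact one_ne_zero)), fun x => ?_⟩
  rw [show ((2 * (M : ℂ) + α + β + 2) / 2) = b from hb]
  have hF1 : S1.eval x = F21 (-(M : ℂ)) b ((α + 1) / 2) M ((1 - x ^ 2) / (1 - c ^ 2)) := by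
    rw [hS1, eval_finset_sum, F21]
    refine Finset.sum_congr rfl fun k _ => ?_
    rw [ha1]
    simp only [eval_mul, eval_C, eval_pow, eval_sub, eval_one, eval_X, hZ, hu]
    congr 1
    rw [div_eq_mul_inv, mul_comm]
  have hF2 : S2.eval x = F21 (1 - (M : ℂ)) b ((α + 3) / 2) (M - 1) ((1 - x ^ 2) / (1 - c ^ 2)) := by
    rw [hS2, eval_finset_sum, F21]
    refine Finset.sum_congr rfl fun k _ => ?_
    rw [ha2]
    simp only [eval_mul, eval_C, eval_pow, eval_sub, eval_one, eval_X, hZ, hu]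
    congr 1
    rw [div_eq_mul_inv, mul_comm]
  simp only [eval_mul, eval_add, eval_C, eval_sub, eval_one, eval_X, hF1, hF2, hκdef, htdef]
  ring
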